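/- Let P be a positive semidefinite real d×d matrix satisfying the Lyapunov equation A P + P Aᵀ + N P Nᵀ + B Bᵀ = 0 for matrices A, N ∈ ℝ^{d×d} and B ∈ ℝ^{d×n}. Then the kernel of P is invariant under Aᵀ and Nᵀ, and the columns of B lie in the orthogonal complement of ker(P); equivalently, Nᵀ(ker P) ⊆ ker P, Aᵀ(ker P) ⊆ ker P, and ran(B) ⊆ (ker P)^⊥. -/

import Mathlib

open Matrix

/-- If a positive semidefinite `P` satisfies the Lyapunov equation
`A P + P Aᵀ + N P Nᵀ + B Bᵀ = 0`, then `ker P` is invariant under `Aᵀ` and `Nᵀ`,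
and the columns of `B` lie in `(ker P)ᗮ`. -/
theorem kernel_invariance_reachability_lyapunov
    {d n : ℕ} (A N P : Matrix (Fin d) (Fin d) ℝ) (B : Matrix (Fin d) (Fin n) ℝ)
    (hP : P.PosSemidef)
    (hLyap : A * P + P * Aᵀ + N * P * Nᵀ + B * Bᵀ = 0) :
    (∀ x : Fin d → ℝ, P.mulVec x = 0 → P.mulVec (Nᵀ.mulVec x) = 0) ∧
    (∀ x : Fin d → ℝ, P.mulVec x = 0 → P.mulVec (Aᵀ.mulVec x) = 0) ∧
    (∀ (x : Fin d → ℝ) (u : Fin n → ℝ),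
      P.mulVec x = 0 → dotProduct (B.mulVec u) x = 0) := by
  have hPt : Pᵀ = P := hP.1
  -- main quadratic form argument
  have key : ∀ x : Fin d → ℝ, P.mulVec x = 0 →
      P.mulVec (Nᵀ.mulVec x) = 0 ∧ Bᵀ.mulVec x = 0 := by
    intro x hx
    have hq : x ⬝ᵥ ((A * P + P * Aᵀ + N * P * Nᵀ + B * Bᵀ) *ᵥ x) = 0 := by
      rw [hLyap]; simp
    have h1 : x ⬝ᵥ ((A * P) *ᵥ x) = 0 := by
      rw [← mulVec_mulVec, hx, mulVec_zero, dotProduct_zero]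
    have h2 : x ⬝ᵥ ((P * Aᵀ) *ᵥ x) = 0 := by
      rw [← mulVec_mulVec, dotProduct_mulVec, ← mulVec_transpose, hPt, hx,
        zero_dotProduct]
    have h3 : x ⬝ᵥ ((N * P * Nᵀ) *ᵥ x) =
        (Nᵀ *ᵥ x) ⬝ᵥ (P *ᵥ (Nᵀ *ᵥ x)) := by
      rw [← mulVec_mulVec, ← mulVec_mulVec, dotProduct_mulVec, ← mulVec_transpose]
    have h4 : x ⬝ᵥ ((B * Bᵀ) *ᵥ x) = (Bᵀ *ᵥ x) ⬝ᵥ (Bᵀ *ᵥ x) := by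
      rw [← mulVec_mulVec, dotProduct_mulVec, ← mulVec_transpose]
    have hsum : (Nᵀ *ᵥ x) ⬝ᵥ (P *ᵥ (Nᵀ *ᵥ x)) + (Bᵀ *ᵥ x) ⬝ᵥ (Bᵀ *ᵥ x) = 0 := by
      have := hq
      simp only [add_mulVec, dotProduct_add, h1, h2, h3, h4] at this
      linarith
    have hNnn : 0 ≤ (Nᵀ *ᵥ x) ⬝ᵥ (P *ᵥ (Nᵀ *ᵥ x)) := by simpa using hP.dotProduct_mulVec_nonneg (Nᵀ *ᵥ x)
    have hBnn : 0 ≤ (Bᵀ *ᵥ x) ⬝ᵥ (Bᵀ *ᵥ x) := Finset.sum_nonneg fun i _ => mul_self_nonneg _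
    have hN0 : (Nᵀ *ᵥ x) ⬝ᵥ (P *ᵥ (Nᵀ *ᵥ x)) = 0 := by linarith
    have hB0 : (Bᵀ *ᵥ x) ⬝ᵥ (Bᵀ *ᵥ x) = 0 := by linarith
    refine ⟨?_, ?_⟩
    · have := (hP.dotProduct_mulVec_zero_iff (Nᵀ *ᵥ x)).mp (by simpa using hN0)
      exact this
    · exact dotProduct_self_eq_zero.mp hB0
  refine ⟨fun x hx => (key x hx).1, ?_, ?_⟩
  · intro x hx
    obtain ⟨hN, hB⟩ := key x hx
    have hv : (A * P + P * Aᵀ + N * P * Nᵀ + B * Bᵀ) *ᵥ x = 0 := by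
      rw [hLyap, zero_mulVec]
    simp only [add_mulVec, ← mulVec_mulVec] at hv
    rw [hx, mulVec_zero, hN, mulVec_zero, hB, mulVec_zero] at hv
    simpa using hv
  · intro x u hx
    have hB := (key x hx).2
    rw [dotProduct_comm, dotProduct_mulVec, ← mulVec_transpose, hB, zero_dotProduct]
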